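/- Let V, S be real Hilbert spaces with norms ⦀·⦀_V, ⦀·⦀_S. Suppose e_u^n ∈ V and e_T^n ∈ S satisfy, for all n ≥ 1: Pr ⦀e_u^n⦀² ≤ N ⦀e_u^{n−1}⦀ U ⦀e_u^n⦀ + Pr·Ra ⦀e_T^n⦀ ⦀e_u^n⦀ and κ ⦀e_T^n⦀² ≤ M ⦀e_u^{n−1}⦀ Θ ⦀e_T^n⦀, where N, M, U, Θ, Pr, Ra, κ > 0 are constants with Pr^{−1}N U + Ra κ^{−1} M Θ ≤ 1 − C₀ for some C₀ ∈ (0,1). Then ⦀e_u^n⦀ ≤ (1−C₀)^n ⦀e_u^0⦀ and ⦀e_T^n⦀ ≤ κ^{−1} M Θ (1−C₀)^{n−1} ⦀e_u^0⦀, so both sequences converge to zero. -/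

import Mathlib

/-- Abstract form of the Oseen-iteration error recursion: from
`Pr⦀e_u^n⦀² ≤ N⦀e_u^{n−1}⦀U⦀e_u^n⦀ + Pr·Ra⦀e_T^n⦀⦀e_u^n⦀` and
`κ⦀e_T^n⦀² ≤ M⦀e_u^{n−1}⦀Θ⦀e_T^n⦀` with `Pr⁻¹NU + Raκ⁻¹MΘ ≤ 1 − C₀`, `0 < C₀ < 1`,
one gets geometric decay of both error sequences, hence convergence to zero. -/
theorem oseen_error_recursion
    {V S : Type*} [NormedAddCommGroup V] [InnerProductSpace ℝ V]
    [NormedAddCommGroup S] [InnerProductSpace ℝ S]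
    (eu : ℕ → V) (eT : ℕ → S)
    (N M U Θ Pr Ra κ C₀ : ℝ)
    (hN : 0 < N) (hM : 0 < M) (hU : 0 < U) (hΘ : 0 < Θ)
    (hPr : 0 < Pr) (hRa : 0 < Ra) (hκ : 0 < κ) (hC0 : 0 < C₀) (hC1 : C₀ < 1)
    (hsmall : Pr⁻¹ * N * U + Ra * κ⁻¹ * M * Θ ≤ 1 - C₀)
    (hu : ∀ n, 1 ≤ n →
      Pr * ‖eu n‖ ^ 2 ≤ N * ‖eu (n - 1)‖ * U * ‖eu n‖ + Pr * Ra * ‖eT n‖ * ‖eu n‖)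
    (hT : ∀ n, 1 ≤ n → κ * ‖eT n‖ ^ 2 ≤ M * ‖eu (n - 1)‖ * Θ * ‖eT n‖) :
    (∀ n, ‖eu n‖ ≤ (1 - C₀) ^ n * ‖eu 0‖) ∧
    (∀ n, 1 ≤ n → ‖eT n‖ ≤ κ⁻¹ * M * Θ * (1 - C₀) ^ (n - 1) * ‖eu 0‖) ∧
    Filter.Tendsto (fun n => ‖eu n‖) Filter.atTop (nhds 0) ∧
    Filter.Tendsto (fun n => ‖eT n‖) Filter.atTop (nhds 0) := by
  have hq0 : (0:ℝ) < 1 - C₀ := by linarith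
  have hq1 : (1:ℝ) - C₀ < 1 := by linarith
  -- temperature bound in terms of previous velocity error
  have hTb : ∀ n, 1 ≤ n → ‖eT n‖ ≤ κ⁻¹ * M * Θ * ‖eu (n - 1)‖ := by
    intro n hn
    rcases eq_or_lt_of_le (norm_nonneg (eT n)) with h | h
    · rw [← h]; positivity
    · have h1 := hT n hn
      have h2 : κ * ‖eT n‖ ≤ M * ‖eu (n - 1)‖ * Θ := by nlinarith
      have h3 : ‖eT n‖ ≤ M * ‖eu (n - 1)‖ * Θ / κ := by
        rw [le_div_iff₀ hκ]; linarith [h2]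
      have h4 : κ⁻¹ * M * Θ * ‖eu (n - 1)‖ = M * ‖eu (n - 1)‖ * Θ / κ := by
        field_simp
      linarith
  -- one-step contraction for velocity
  have step : ∀ n, 1 ≤ n → ‖eu n‖ ≤ (1 - C₀) * ‖eu (n - 1)‖ := by
    intro n hn
    rcases eq_or_lt_of_le (norm_nonneg (eu n)) with h | h
    · rw [← h]; positivity
    · have h1 := hu n hn
      have h2 : Pr * ‖eu n‖ ≤ N * ‖eu (n - 1)‖ * U + Pr * Ra * ‖eT n‖ := by nlinarith
      have h3 := hTb n hn
      have hk := mul_inv_cancel₀ hκ.ne'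
      have hp := mul_inv_cancel₀ hPr.ne'
      have hnn := norm_nonneg (eu (n-1))
      -- ‖eu n‖ ≤ Pr⁻¹ N U ‖eu(n-1)‖ + Ra ‖eT n‖
      have h4 : ‖eu n‖ ≤ Pr⁻¹ * N * U * ‖eu (n-1)‖ + Ra * ‖eT n‖ := by
        have h2' : ‖eu n‖ ≤ (N * ‖eu (n - 1)‖ * U + Pr * Ra * ‖eT n‖) / Pr := by
          rw [le_div_iff₀ hPr]; linarith [h2]
        have heq : Pr⁻¹ * N * U * ‖eu (n-1)‖ + Ra * ‖eT n‖
            = (N * ‖eu (n - 1)‖ * U + Pr * Ra * ‖eT n‖) / Pr := by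
          field_simp
        linarith
      have h5 : Ra * ‖eT n‖ ≤ Ra * (κ⁻¹ * M * Θ * ‖eu (n-1)‖) :=
        mul_le_mul_of_nonneg_left h3 hRa.le
      calc ‖eu n‖ ≤ Pr⁻¹ * N * U * ‖eu (n-1)‖ + Ra * (κ⁻¹ * M * Θ * ‖eu (n-1)‖) := by
              linarith
        _ = (Pr⁻¹ * N * U + Ra * κ⁻¹ * M * Θ) * ‖eu (n-1)‖ := by ring
        _ ≤ (1 - C₀) * ‖eu (n-1)‖ := mul_le_mul_of_nonneg_right hsmall hnn
  -- geometric decay of velocity error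
  have geo : ∀ n, ‖eu n‖ ≤ (1 - C₀) ^ n * ‖eu 0‖ := by
    intro n
    induction n with
    | zero => simp
    | succ k ih =>
        have h1 := step (k+1) (Nat.le_add_left 1 k)
        simp only [Nat.add_sub_cancel] at h1
        calc ‖eu (k+1)‖ ≤ (1 - C₀) * ‖eu k‖ := h1
          _ ≤ (1 - C₀) * ((1 - C₀) ^ k * ‖eu 0‖) :=
              mul_le_mul_of_nonneg_left ih hq0.le
          _ = (1 - C₀) ^ (k+1) * ‖eu 0‖ := by ring
  have geoT : ∀ n, 1 ≤ n → ‖eT n‖ ≤ κ⁻¹ * M * Θ * (1 - C₀) ^ (n - 1) * ‖eu 0‖ := by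
    intro n hn
    calc ‖eT n‖ ≤ κ⁻¹ * M * Θ * ‖eu (n-1)‖ := hTb n hn
      _ ≤ κ⁻¹ * M * Θ * ((1 - C₀) ^ (n-1) * ‖eu 0‖) := by
          apply mul_le_mul_of_nonneg_left (geo (n-1)); positivity
      _ = κ⁻¹ * M * Θ * (1 - C₀) ^ (n - 1) * ‖eu 0‖ := by ring
  have habs : |1 - C₀| < 1 := by rw [abs_of_pos hq0]; exact hq1
  have hpow : Filter.Tendsto (fun n : ℕ => (1 - C₀) ^ n * ‖eu 0‖) Filter.atTop (nhds 0) := by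
    have := (tendsto_pow_atTop_nhds_zero_of_abs_lt_one habs).mul_const ‖eu 0‖
    simpa using this
  have htu : Filter.Tendsto (fun n => ‖eu n‖) Filter.atTop (nhds 0) :=
    squeeze_zero (fun n => norm_nonneg _) geo hpow
  have htT : Filter.Tendsto (fun n => ‖eT n‖) Filter.atTop (nhds 0) := by
    have hbnd : Filter.Tendsto (fun n : ℕ => κ⁻¹ * M * Θ * (1 - C₀) ^ (n - 1) * ‖eu 0‖)
        Filter.atTop (nhds 0) := by
      have h1 : Filter.Tendsto (fun n : ℕ => n - 1) Filter.atTop Filter.atTop :=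
        Filter.tendsto_atTop_atTop.mpr (fun b => ⟨b + 1, fun a ha => by omega⟩)
      have h2 := (tendsto_pow_atTop_nhds_zero_of_abs_lt_one habs).comp h1
      have := (h2.const_mul (κ⁻¹ * M * Θ)).mul_const ‖eu 0‖
      simpa [Function.comp, mul_assoc] using this
    refine tendsto_of_tendsto_of_tendsto_of_le_of_le' tendsto_const_nhds hbnd
      (Filter.Eventually.of_forall fun n => norm_nonneg _) ?_
    filter_upwards [Filter.eventually_ge_atTop 1] with n hn
    exact geoT n hn
  exact ⟨geo, geoT, htu, htT⟩
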